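/- Let $p_1,\ldots,p_d$ be p-values separated by a filtration $\mathscr{F}_0 \subseteq \cdots \subseteq \mathscr{F}_d$, meaning: (1) for each $k$, on the event $\{k_0 \le k-1\}$ (the event that the $k$-th null is true), $\P(p_k \le \alpha \mid \mathscr{F}_{k-1}) \le \alpha$ almost surely for all $\alpha \in [0,1]$; and (2) $p_k$ and the event $\{k_0 \le k\}$ are $\mathscr{F}_k$-measurable. Then for every $k$ and all $\alpha_{k+1},\ldots,\alpha_d \in [0,1]$, almost surely on $\{k_0 = k\}$: $\P(p_{k+1} \le \alpha_{k+1}, \ldots, p_d \le \alpha_d \mid \mathscr{F}_k) \le \prod_{i=k+1}^d \alpha_i$. -/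

import Mathlib

open MeasureTheory

private lemma key_backward_induction
    {Ω : Type*} [MeasurableSpace Ω] (μ : Measure Ω) [IsProbabilityMeasure μ]
    (d : ℕ) (F : Filtration ℕ (inferInstance : MeasurableSpace Ω))
    (A : ℕ → Set Ω) (k0 : Ω → ℕ)
    (hA : ∀ i, 1 ≤ i → i ≤ d → MeasurableSet[F i] (A i))
    (hk0meas : ∀ k, MeasurableSet[F k] {ω | k0 ω ≤ k})
    (c : ℕ → ℝ) (hc : ∀ i, c i ∈ Set.Icc (0 : ℝ) 1)
    (hsuper : ∀ k, 1 ≤ k → k ≤ d →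
      ∀ᵐ ω ∂μ, k0 ω ≤ k - 1 →
        (μ[Set.indicator (A k) (fun _ => (1 : ℝ)) | F (k - 1)]) ω ≤ c k) :
    ∀ n k, k ≤ d → d - k = n →
      ∀ᵐ ω ∂μ, k0 ω ≤ k →
        (μ[Set.indicator (⋂ i ∈ Finset.Ioc k d, A i) (fun _ => (1 : ℝ)) | F k]) ω
          ≤ ∏ i ∈ Finset.Ioc k d, c i := by
  have hA0 : ∀ i, 1 ≤ i → i ≤ d → MeasurableSet (A i) := fun i h1 h2 => F.le i _ (hA i h1 h2)
  intro n
  induction n with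
  | zero =>
    intro k hkd hn
    have hkd' : k = d := by omega
    subst hkd'
    have h1 : (⋂ i ∈ Finset.Ioc k k, A i) = Set.univ := by simp
    rw [h1]
    have h2 : Set.indicator (Set.univ : Set Ω) (fun _ => (1 : ℝ)) = fun _ => (1 : ℝ) := by
      simp
    rw [h2, condExp_const (F.le k)]
    filter_upwards with ω _
    simp
  | succ n ih =>
    intro k hkd hn
    have hk1d : k + 1 ≤ d := by omega
    have IH := ih (k + 1) hk1d (by omega)
    -- abbreviations
    set T : Set Ω := ⋂ i ∈ Finset.Ioc (k + 1) d, A i with hT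
    set g : Ω → ℝ := Set.indicator (A (k + 1)) (fun _ => (1 : ℝ)) with hg
    set fT : Ω → ℝ := Set.indicator T (fun _ => (1 : ℝ)) with hfT
    set E : Set Ω := {ω | k0 ω ≤ k} with hE
    set eE : Ω → ℝ := Set.indicator E (fun _ => (1 : ℝ)) with heE
    set C : ℝ := ∏ i ∈ Finset.Ioc (k + 1) d, c i with hC
    have hCnonneg : 0 ≤ C := Finset.prod_nonneg fun i _ => (hc i).1
    have hIoc : Finset.Ioc k d = insert (k + 1) (Finset.Ioc (k + 1) d) := by
      ext i; simp only [Finset.mem_Ioc, Finset.mem_insert]; omega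
    have hprod : ∏ i ∈ Finset.Ioc k d, c i = c (k + 1) * C := by
      rw [hIoc, Finset.prod_insert (by simp)]
    have hSet : (⋂ i ∈ Finset.Ioc k d, A i) = A (k + 1) ∩ T := by
      rw [hIoc]; simp [hT]
    have hTmeas : MeasurableSet T := by
      refine Finset.measurableSet_biInter _ fun i hi => ?_
      rw [Finset.mem_Ioc] at hi
      exact hA0 i (by omega) hi.2
    have hAk1 : MeasurableSet (A (k + 1)) := hA0 (k + 1) (by omega) hk1d
    have hEmeas : MeasurableSet E := F.le k _ (hk0meas k)
    -- the indicator of the big intersection is g * fT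
    have hmul : Set.indicator (⋂ i ∈ Finset.Ioc k d, A i) (fun _ => (1 : ℝ)) = g * fT := by
      rw [hSet]
      exact Set.inter_indicator_one
    rw [hmul]
    -- integrability facts
    have hfT_int : Integrable fT μ := (integrable_const (1 : ℝ)).indicator hTmeas
    have hg_int : Integrable g μ := (integrable_const (1 : ℝ)).indicator hAk1
    have hbd : ∀ (s : Set Ω) (x : Ω), ‖Set.indicator s (fun _ => (1 : ℝ)) x‖ ≤ 1 := by
      intro s x
      by_cases h : x ∈ s <;>
        simp [Set.indicator_of_mem, Set.indicator_of_notMem, h]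
    have hg_bdd : ∀ x, ‖g x‖ ≤ 1 := hbd _
    have heE_bdd : ∀ x, ‖eE x‖ ≤ 1 := hbd _
    have hg_sm : StronglyMeasurable[F (k + 1)] g :=
      stronglyMeasurable_const.indicator (hA (k + 1) (by omega) hk1d)
    have heE_sm : StronglyMeasurable[F k] eE :=
      stronglyMeasurable_const.indicator (hk0meas k)
    set Y : Ω → ℝ := μ[fT | F (k + 1)] with hY
    have hY_int : Integrable Y μ := integrable_condExp
    have hgfT_int : Integrable (g * fT) μ :=
      Integrable.bdd_mul (c := 1) hfT_int (hg_sm.mono (F.le _)).aestronglyMeasurable (Filter.Eventually.of_forall hg_bdd)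
    have hgY_int : Integrable (g * Y) μ :=
      Integrable.bdd_mul (c := 1) hY_int (hg_sm.mono (F.le _)).aestronglyMeasurable (Filter.Eventually.of_forall hg_bdd)
    have heEgY_int : Integrable (eE * (g * Y)) μ :=
      Integrable.bdd_mul (c := 1) hgY_int (heE_sm.mono (F.le _)).aestronglyMeasurable (Filter.Eventually.of_forall heE_bdd)
    have heEg_int : Integrable (eE * g) μ :=
      Integrable.bdd_mul (c := 1) hg_int (heE_sm.mono (F.le _)).aestronglyMeasurable (Filter.Eventually.of_forall heE_bdd)
    have hCeEg_int : Integrable (C • (eE * g)) μ := heEg_int.smul C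
    -- tower property
    have h1 : μ[g * fT | F k] =ᵐ[μ] μ[μ[g * fT | F (k + 1)] | F k] :=
      (condExp_condExp_of_le (F.mono (Nat.le_succ k)) (F.le (k + 1))).symm
    -- pull out g at level k+1
    have h2 : μ[g * fT | F (k + 1)] =ᵐ[μ] g * Y :=
      condExp_mul_of_stronglyMeasurable_left hg_sm hgfT_int hfT_int
    have h12 : μ[g * fT | F k] =ᵐ[μ] μ[g * Y | F k] := h1.trans (condExp_congr_ae h2)
    -- pull out eE at level k
    have h3 : μ[eE * (g * Y) | F k] =ᵐ[μ] eE * μ[g * Y | F k] :=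
      condExp_mul_of_stronglyMeasurable_left heE_sm heEgY_int hgY_int
    -- monotonicity using IH
    have hpt : eE * (g * Y) ≤ᵐ[μ] C • (eE * g) := by
      filter_upwards [IH] with ω hIHω
      simp only [Pi.mul_apply, Pi.smul_apply, smul_eq_mul]
      by_cases hωE : ω ∈ E
      · have hk01 : k0 ω ≤ k + 1 := le_trans hωE (Nat.le_succ k)
        have hYle : Y ω ≤ C := hIHω hk01
        have hgnn : 0 ≤ g ω := Set.indicator_nonneg (fun _ _ => zero_le_one) ω
        rw [heE, Set.indicator_of_mem hωE]
        calc 1 * (g ω * Y ω) = g ω * Y ω := one_mul _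
          _ ≤ g ω * C := mul_le_mul_of_nonneg_left hYle hgnn
          _ = C * (1 * g ω) := by ring
      · rw [heE, Set.indicator_of_notMem hωE]
        simp
    have h4 : μ[eE * (g * Y) | F k] ≤ᵐ[μ] μ[C • (eE * g) | F k] :=
      condExp_mono heEgY_int hCeEg_int hpt
    -- pull out the constant and eE
    have h5 : μ[C • (eE * g) | F k] =ᵐ[μ] C • μ[eE * g | F k] := condExp_smul C (eE * g) (F k)
    have h6 : μ[eE * g | F k] =ᵐ[μ] eE * μ[g | F k] :=
      condExp_mul_of_stronglyMeasurable_left heE_sm heEg_int hg_int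
    have h7 := hsuper (k + 1) (by omega) hk1d
    filter_upwards [h12, h3, h4, h5, h6, h7] with ω hω12 hω3 hω4 hω5 hω6 hω7 hk0ω
    have hωE : ω ∈ E := hk0ω
    have heEω : eE ω = 1 := by rw [heE, Set.indicator_of_mem hωE]
    have step7 : (μ[g | F k]) ω ≤ c (k + 1) := hω7 (by simpa using hk0ω)
    calc (μ[g * fT | F k]) ω = (μ[g * Y | F k]) ω := hω12
      _ = eE ω * (μ[g * Y | F k]) ω := by rw [heEω, one_mul]
      _ = (μ[eE * (g * Y) | F k]) ω := hω3.symm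
      _ ≤ (μ[C • (eE * g) | F k]) ω := hω4
      _ = C * (μ[eE * g | F k]) ω := hω5
      _ = C * (eE ω * (μ[g | F k]) ω) := by rw [hω6]; rfl
      _ = C * (μ[g | F k]) ω := by rw [heEω, one_mul]
      _ ≤ C * c (k + 1) := mul_le_mul_of_nonneg_left step7 hCnonneg
      _ = ∏ i ∈ Finset.Ioc k d, c i := by rw [hprod]; ring

/-- separated super-uniform p-values satisfy the joint conditional
bound `∏ αᵢ` on the event `{k0 = k}`. -/
theorem separated_pvalues_joint_superuniform
    {Ω : Type*} [MeasurableSpace Ω] (μ : Measure Ω) [IsProbabilityMeasure μ]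
    (d : ℕ) (F : Filtration ℕ (inferInstance : MeasurableSpace Ω))
    (p : ℕ → Ω → ℝ) (k0 : Ω → ℕ)
    -- (2) measurability: pₖ is 𝓕ₖ-measurable and {k0 ≤ k} ∈ 𝓕ₖ
    (hmeas : ∀ k, 1 ≤ k → k ≤ d → Measurable[F k] (p k))
    (hk0meas : ∀ k, MeasurableSet[F k] {ω | k0 ω ≤ k})
    -- (1) conditional super-uniformity on the event that the k-th null is true
    (hsuper : ∀ k, 1 ≤ k → k ≤ d → ∀ a ∈ Set.Icc (0 : ℝ) 1,
      ∀ᵐ ω ∂μ, k0 ω ≤ k - 1 →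
        (μ[Set.indicator {ω' | p k ω' ≤ a} (fun _ => (1 : ℝ)) | F (k - 1)]) ω ≤ a) :
    ∀ k ≤ d, ∀ a : ℕ → ℝ, (∀ i, a i ∈ Set.Icc (0 : ℝ) 1) →
      ∀ᵐ ω ∂μ, k0 ω = k →
        (μ[Set.indicator (⋂ i ∈ Finset.Ioc k d, {ω' | p i ω' ≤ a i})
            (fun _ => (1 : ℝ)) | F k]) ω ≤ ∏ i ∈ Finset.Ioc k d, a i := by
  intro k hk a ha
  have hA : ∀ i, 1 ≤ i → i ≤ d → MeasurableSet[F i] {ω' | p i ω' ≤ a i} := fun i h1 h2 =>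
    measurableSet_le (hmeas i h1 h2) measurable_const
  have key := key_backward_induction μ d F (fun i => {ω' | p i ω' ≤ a i}) k0 hA hk0meas a ha
    (fun j h1 h2 => hsuper j h1 h2 (a j) (ha j)) (d - k) k hk rfl
  filter_upwards [key] with ω hω hk0ω
  exact hω (le_of_eq hk0ω)
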